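/- Let A be a nontrivial finite abelian group and k ≥ 1. If ℓ₀ < ℓ₁ < ⋯ < ℓ_N are integers and c₀, …, c_N are polynomials over A of degree at most k−1 such that Σ_{i=0}^{N} (1 − t^k)^{ℓ_i} c_i(t) = 0 in the ring of formal Laurent-type series (after clearing denominators, in A[[t]]), then c_i = 0 for all i. -/

import Mathlib

/-- If `S` is the additive automorphism `F ↦ (1 - t^k)·F` of `A[[t]]` (power series with
coefficients in the abelian group `A`, identified with `ℕ → A` coefficientwise), distinct
integer powers `S^{ℓ₀}, …, S^{ℓ_N}` applied to polynomials `c_i` of degree `< k` can only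
sum to zero when all `c_i` vanish. -/
theorem stmt18 {A : Type*} [AddCommGroup A] [Fintype A] [Nontrivial A]
    (k : ℕ) (hk : 1 ≤ k)
    (S : AddAut (ℕ → A))
    (hS : ∀ (f : ℕ → A) (n : ℕ), S f n = f n - if k ≤ n then f (n - k) else 0)
    (N : ℕ) (l : Fin (N + 1) → ℤ) (hl : StrictMono l)
    (c : Fin (N + 1) → ℕ → A) (hdeg : ∀ (i : Fin (N + 1)) (n : ℕ), k ≤ n → c i n = 0)
    (hsum : ∑ i : Fin (N + 1), ((l i) • S) (c i) = 0) :
    ∀ i : Fin (N + 1), c i = 0 := by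
  -- coefficient formula for natural powers of `S` applied to "polynomials" of degree < k
  have coef : ∀ (m : ℕ) (f : ℕ → A), (∀ n, k ≤ n → f n = 0) →
      ∀ (q r : ℕ), r < k → (m • S) f (q * k + r) = ((-1) ^ q * (m.choose q) : ℤ) • f r := by
    intro m
    induction m with
    | zero =>
      intro f hf q r hr
      simp only [zero_nsmul]
      have h1 : (0 : AddAut (ℕ → A)) f = f := rfl
      rw [h1]
      cases q with
      | zero => simp
      | succ q =>
        rw [hf _ (by nlinarith)]
        simp [Nat.choose_eq_zero_of_lt (Nat.succ_pos q)]
    | succ m ih =>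
      intro f hf q r hr
      have hmul : ((m + 1) • S) f = S ((m • S) f) := by
        rw [succ_nsmul']; rfl
      rw [hmul, hS]
      cases q with
      | zero =>
        simp only [zero_mul, zero_add]
        rw [if_neg (by omega), sub_zero]
        have h0 := ih f hf 0 r hr
        simp only [zero_mul, zero_add] at h0
        simpa using h0
      | succ q =>
        have h1 : (q + 1) * k + r = q * k + r + k := by ring
        rw [h1, if_pos (by omega), Nat.add_sub_cancel]
        have e1 := ih f hf (q + 1) r hr
        rw [h1] at e1
        rw [e1, ih f hf q r hr, ← sub_smul]
        congr 1
        push_cast [Nat.choose_succ_succ]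
        ring
  -- replace integer exponents by natural ones
  set m : Fin (N + 1) → ℕ := fun i => (l i - l 0).toNat with hm
  have hml : ∀ i, (m i : ℤ) = l i - l 0 := by
    intro i
    have h : l 0 ≤ l i := hl.monotone (Fin.zero_le i)
    simp only [hm]
    exact Int.toNat_of_nonneg (sub_nonneg.mpr h)
  have hmmono : StrictMono m := by
    intro a b hab
    have h := hl hab
    have ha := hml a; have hb := hml b
    omega
  have hsum2 : ∑ i : Fin (N + 1), ((m i) • S) (c i) = 0 := by
    have h := congrArg (fun F => ((-(l 0)) • S) F) hsum
    simp only [map_sum, map_zero] at h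
    rw [← h]
    apply Finset.sum_congr rfl
    intro i _
    have h2 : ((-(l 0)) • S) (((l i) • S) (c i)) = ((-(l 0)) • S + (l i) • S) (c i) := rfl
    rw [h2, ← add_zsmul, show -(l 0) + l i = ((m i : ℕ) : ℤ) by rw [hml]; ring,
      natCast_zsmul]
  -- key step: if all later c's vanish, so does c i
  have key : ∀ i : Fin (N + 1), (∀ j, i < j → c j = 0) → c i = 0 := by
    intro i hj
    funext r
    by_cases hr : k ≤ r
    · exact hdeg i r hr
    push_neg at hr
    have h0 := congrFun hsum2 (m i * k + r)
    simp only [Finset.sum_apply, Pi.zero_apply] at h0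
    rw [Finset.sum_eq_single i] at h0
    · rw [coef (m i) (c i) (hdeg i) (m i) r hr] at h0
      simp only [Nat.choose_self, Nat.cast_one, mul_one] at h0
      rcases Nat.even_or_odd (m i) with he | he
      · rwa [Even.neg_one_pow he, one_smul] at h0
      · rwa [Odd.neg_one_pow he, neg_smul, one_smul, neg_eq_zero] at h0
    · intro j _ hji
      rcases lt_or_gt_of_ne hji with h | h
      · rw [coef (m j) (c j) (hdeg j) (m i) r hr,
          Nat.choose_eq_zero_of_lt (hmmono h)]
        simp
      · rw [hj j h]
        simp [map_zero]
    · intro h; exact absurd (Finset.mem_univ i) h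
  -- downward induction
  have main : ∀ d : ℕ, ∀ i : Fin (N + 1), N - i.val ≤ d → c i = 0 := by
    intro d
    induction d with
    | zero =>
      intro i hi
      exact key i (fun j hj => absurd (Fin.lt_def.mp hj) (by have := j.isLt; omega))
    | succ d ihd =>
      intro i hi
      refine key i (fun j hj => ihd j ?_)
      have := Fin.lt_def.mp hj
      have := j.isLt
      omega
  intro i
  exact main N i (by omega)
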